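/- No element of M acting on itself by left multiplication is supported on a finite set; i.e., the maximal tame M-subset M^τ of M is empty. -/
import Mathlib


/-- The monoid of injective self-maps of ω (modelled as ℕ), under composition. -/
def M : Submonoid (Function.End ℕ) where
  carrier := {f | Function.Injective f}
  mul_mem' := fun hf hg => hf.comp hg
  one_mem' := fun _ _ h => h

/-- `x` is supported on `A` if it is fixed by every injection fixing `A` pointwise. -/
def Supported {X : Type*} [MulAction M X] (A : Set ℕ) (x : X) : Prop :=
  ∀ u : M, (∀ a ∈ A, u.1 a = a) → u • x = x

theorem stmt_10 (u : M) : ¬ ∃ A : Set ℕ, A.Finite ∧ Supported A u := by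
  rintro ⟨A, hA, hsupp⟩
  have hu : Function.Injective u.1 := u.2
  have hpre : (u.1 ⁻¹' A).Finite := hA.preimage hu.injOn
  obtain ⟨n, hn⟩ := hpre.infinite_compl.nonempty
  have hmA : u.1 n ∉ A := hn
  obtain ⟨m', hm'⟩ := ((hA.union (Set.finite_singleton (u.1 n))).infinite_compl).nonempty
  have hm'A : m' ∉ A := fun h => hm' (Or.inl h)
  have hm'm : m' ≠ u.1 n := fun h => hm' (Or.inr h)
  have hf : (⇑(Equiv.swap (u.1 n) m') : Function.End ℕ) ∈ M := (Equiv.swap (u.1 n) m').injective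
  have hfix : ∀ a ∈ A, (⟨_, hf⟩ : M).1 a = a := by
    intro a ha
    exact Equiv.swap_apply_of_ne_of_ne (fun h => hmA (h ▸ ha)) (fun h => hm'A (h ▸ ha))
  have key := hsupp ⟨_, hf⟩ hfix
  have h2 : Equiv.swap (u.1 n) m' (u.1 n) = u.1 n := by
    have h3 := congrArg Subtype.val key
    rw [smul_eq_mul] at h3
    exact congrFun h3 n
  rw [Equiv.swap_apply_left] at h2
  exact hm'm h2
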